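/- Let n ≥ 3 and let f_0, …, f_n be complex numbers such that the 2 × n matrix A with entries A_{i,j} = f_{i+j} (for 0 ≤ i ≤ 1 and 0 ≤ j ≤ n−1) has rank 2. Then the 3 × (n−1) matrix B with entries B_{i,j} = f_{i+j} (for 0 ≤ i ≤ 2 and 0 ≤ j ≤ n−2) has rank at least 2. -/

import Mathlib

open Module Submodule Matrix

/-- If all pairwise "cross products" of a family of vectors in `ℂ²` vanish,
the span of the family has rank at most 1. -/
lemma span_cross {ι : Type*} (g : ι → Fin 2 → ℂ)
    (h : ∀ j k, g j 0 * g k 1 = g j 1 * g k 0) :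
    Module.finrank ℂ (Submodule.span ℂ (Set.range g)) ≤ 1 := by
  by_cases hz : ∀ j, g j = 0
  · have hsub : Set.range g ⊆ ({0} : Set (Fin 2 → ℂ)) := by
      rintro _ ⟨j, rfl⟩; simp [hz j]
    have : Submodule.span ℂ (Set.range g) ≤ Submodule.span ℂ ({0} : Set (Fin 2 → ℂ)) :=
      Submodule.span_mono hsub
    simp only [Submodule.span_zero_singleton] at this
    have h0 : Submodule.span ℂ (Set.range g) = ⊥ := le_bot_iff.mp this
    rw [h0]
    simp
  · push_neg at hz
    obtain ⟨j0, hj0⟩ := hz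
    have hmem : ∀ k, g k ∈ Submodule.span ℂ ({g j0} : Set (Fin 2 → ℂ)) := by
      intro k
      rw [Submodule.mem_span_singleton]
      have hne : g j0 0 ≠ 0 ∨ g j0 1 ≠ 0 := by
        by_contra hcon
        push_neg at hcon
        apply hj0
        funext i
        fin_cases i
        · exact hcon.1
        · exact hcon.2
      rcases hne with h0 | h1
      · refine ⟨g k 0 / g j0 0, ?_⟩
        funext i
        fin_cases i
        · simp only [Pi.smul_apply, smul_eq_mul, Fin.zero_eta, Fin.mk_one]
          field_simp
        · simp only [Pi.smul_apply, smul_eq_mul, Fin.zero_eta, Fin.mk_one]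
          field_simp
          linear_combination h k j0
      · refine ⟨g k 1 / g j0 1, ?_⟩
        funext i
        fin_cases i
        · simp only [Pi.smul_apply, smul_eq_mul, Fin.zero_eta, Fin.mk_one]
          field_simp
          linear_combination h j0 k
        · simp only [Pi.smul_apply, smul_eq_mul, Fin.zero_eta, Fin.mk_one]
          field_simp
    have hle : Submodule.span ℂ (Set.range g) ≤ Submodule.span ℂ ({g j0} : Set (Fin 2 → ℂ)) :=
      Submodule.span_le.2 (by rintro _ ⟨k, rfl⟩; exact hmem k)
    exact le_trans (Submodule.finrank_mono hle) (finrank_span_singleton hj0).le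

/-- If the span of a family of vectors has rank at most one, all the 2×2 "minors"
of the family vanish. -/
lemma span_dep {ι κ : Type*} [Fintype κ] (g : ι → κ → ℂ)
    (h : Module.finrank ℂ (Submodule.span ℂ (Set.range g)) ≤ 1) :
    ∀ j k i i', g j i * g k i' = g j i' * g k i := by
  set S := Submodule.span ℂ (Set.range g) with hS
  obtain ⟨v, hv⟩ := finrank_le_one_iff.mp h
  intro j k i i'
  obtain ⟨a, ha⟩ := hv ⟨g j, Submodule.subset_span ⟨j, rfl⟩⟩
  obtain ⟨b, hb⟩ := hv ⟨g k, Submodule.subset_span ⟨k, rfl⟩⟩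
  have ha' : a • (v : κ → ℂ) = g j := congrArg Subtype.val ha
  have hb' : b • (v : κ → ℂ) = g k := congrArg Subtype.val hb
  have haj : ∀ m, g j m = a * (v : κ → ℂ) m := fun m => by
    rw [← ha']; simp
  have hbk : ∀ m, g k m = b * (v : κ → ℂ) m := fun m => by
    rw [← hb']; simp
  rw [haj i, haj i', hbk i, hbk i']
  ring

/-- Let `n ≥ 3` and `f 0, …, f n` be complex numbers such that the `2 × n` Hankel-type
matrix `A` with `A i j = f (i + j)` has rank `2`. Then the `3 × (n-1)` Hankel-type matrix
`B` with `B i j = f (i + j)` has rank at least `2`. -/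
theorem stmt_1 (n : ℕ) (hn : 3 ≤ n) (f : ℕ → ℂ)
    (A : Matrix (Fin 2) (Fin n) ℂ) (hA : ∀ i j, A i j = f (i.val + j.val))
    (hrankA : A.rank = 2)
    (B : Matrix (Fin 3) (Fin (n - 1)) ℂ) (hB : ∀ i j, B i j = f (i.val + j.val)) :
    2 ≤ B.rank := by
  by_contra hB2
  push_neg at hB2
  have hBspan : Module.finrank ℂ (Submodule.span ℂ (Set.range Bᵀ)) ≤ 1 := by
    rw [show Set.range Bᵀ = Set.range B.col from rfl, ← Matrix.rank_eq_finrank_span_cols]; omega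
  have hdep0 := span_dep Bᵀ hBspan
  have hdepN : ∀ j k i i' : ℕ, j ≤ n - 2 → k ≤ n - 2 → i ≤ 2 → i' ≤ 2 →
      f (i + j) * f (i' + k) = f (i' + j) * f (i + k) := by
    intro j k i i' hj hk hi hi'
    have := hdep0 ⟨j, by omega⟩ ⟨k, by omega⟩ ⟨i, by omega⟩ ⟨i', by omega⟩
    simpa [Matrix.transpose_apply, hB] using this
  -- Step A: rank A = 2 gives a nonvanishing 2×2 minor of A
  have hEx : ∃ j k : Fin n, f (0 + j.val) * f (1 + k.val) ≠ f (1 + j.val) * f (0 + k.val) := by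
    by_contra hall
    push_neg at hall
    have h1 : Module.finrank ℂ (Submodule.span ℂ (Set.range Aᵀ)) ≤ 1 := by
      apply span_cross
      intro j k
      have := hall j k
      simpa [Matrix.transpose_apply, hA] using this
    rw [show Set.range Aᵀ = Set.range A.col from rfl, ← Matrix.rank_eq_finrank_span_cols, hrankA] at h1
    omega
  obtain ⟨j, k, hjk⟩ := hEx
  have hjlt : j.val < n := j.isLt
  have hklt : k.val < n := k.isLt
  set jv := j.val with hjv
  set kv := k.val with hkv
  by_cases h1 : jv ≤ n - 2 ∧ kv ≤ n - 2
  · exact hjk (hdepN jv kv 0 1 h1.1 h1.2 (by norm_num) (by norm_num))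
  by_cases h2 : 1 ≤ jv ∧ 1 ≤ kv
  · have key := hdepN (jv - 1) (kv - 1) 1 2 (by omega) (by omega) (by norm_num) (by norm_num)
    have e1 : 1 + (jv - 1) = 0 + jv := by omega
    have e2 : 2 + (kv - 1) = 1 + kv := by omega
    have e3 : 2 + (jv - 1) = 1 + jv := by omega
    have e4 : 1 + (kv - 1) = 0 + kv := by omega
    rw [e1, e2, e3, e4] at key
    exact hjk key
  -- remaining case: the nonzero minor uses columns 0 and n-1
  have hcase : (jv = 0 ∧ kv = n - 1) ∨ (jv = n - 1 ∧ kv = 0) := by omega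
  have hC : f 0 * f n ≠ f 1 * f (n - 1) := by
    rcases hcase with ⟨hj0, hk0⟩ | ⟨hj0, hk0⟩
    · rw [hj0, hk0] at hjk
      have e1 : 0 + 0 = 0 := by omega
      have e2 : 1 + (n - 1) = n := by omega
      have e3 : 1 + 0 = 1 := by omega
      have e4 : 0 + (n - 1) = n - 1 := by omega
      rw [e1, e2, e3, e4] at hjk
      exact hjk
    · rw [hj0, hk0] at hjk
      have e1 : 0 + (n - 1) = n - 1 := by omega
      have e2 : 1 + 0 = 1 := by omega
      have e3 : 1 + (n - 1) = n := by omega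
      have e4 : 0 + 0 = 0 := by omega
      rw [e1, e2, e3, e4] at hjk
      intro h
      exact hjk (by linear_combination -h)
  have hC2 : f 0 * f n - f 1 * f (n - 1) ≠ 0 := sub_ne_zero.mpr hC
  -- e1 : f 0 * f 2 = f 1 * f 1
  have ee1 : f 0 * f 2 = f 1 * f 1 := by
    have := hdepN 0 1 0 1 (by omega) (by omega) (by norm_num) (by norm_num)
    simpa using this
  -- e2 : f 1 * f n = f 2 * f (n - 1)
  have ee2 : f 1 * f n = f 2 * f (n - 1) := by
    have key := hdepN 0 (n - 2) 1 2 (by omega) (by omega) (by norm_num) (by norm_num)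
    have e1 : 1 + 0 = 1 := by omega
    have e2 : 2 + (n - 2) = n := by omega
    have e3 : 2 + 0 = 2 := by omega
    have e4 : 1 + (n - 2) = n - 1 := by omega
    rw [e1, e2, e3, e4] at key
    exact key
  have hf1 : f 1 = 0 := by
    have hz : f 1 * (f 0 * f n - f 1 * f (n - 1)) = 0 := by
      linear_combination f 0 * ee2 + f (n - 1) * ee1
    exact (mul_eq_zero.mp hz).resolve_right hC2
  have hf2 : f 2 = 0 := by
    have hz : f 2 * (f 0 * f n - f 1 * f (n - 1)) = 0 := by
      linear_combination f n * ee1 + f 1 * ee2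
    exact (mul_eq_zero.mp hz).resolve_right hC2
  rw [hf1, zero_mul] at hC
  apply hC
  have key := hdepN 0 (n - 2) 0 2 (by omega) (by omega) (by norm_num) (by norm_num)
  have e1 : (0 : ℕ) + 0 = 0 := by omega
  have e2 : 2 + (n - 2) = n := by omega
  have e3 : 2 + 0 = 2 := by omega
  have e4 : 0 + (n - 2) = n - 2 := by omega
  rw [e1, e2, e3, e4] at key
  rw [key, hf2, zero_mul]
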